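/- Let $f \in \mathbb{F}_q[t_1,\ldots,t_r]$ be nonzero with $\deg_{t_i} f \leq b_i \leq q-2$ for all $i$. Then the number of zeros of $f$ in $(\mathbb{F}_q^\ast)^r$ is at most $(q-1)^r - \prod_{i=1}^r (q-1-b_i)$. -/

import Mathlib

open MvPolynomial Finset

-- univariate: nonzero P has at least q-1-deg nonvanishing points in Fˣ
lemma univar_lb {F : Type*} [Field F] [Fintype F] [DecidableEq F]
    (P : Polynomial F) (hP : P ≠ 0) :
    Fintype.card F - 1 - P.natDegree ≤
      (Finset.univ.filter (fun x : Fˣ => P.eval (x : F) ≠ 0)).card := by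
  have hz : (Finset.univ.filter (fun x : Fˣ => P.eval (x : F) = 0)).card ≤ P.natDegree := by
    have h1 : (Finset.univ.filter (fun x : Fˣ => P.eval (x : F) = 0)).card
        ≤ P.roots.toFinset.card := by
      refine Finset.card_le_card_of_injOn (fun x => (x : F)) ?_ ?_
      · intro x hx
        simp only [Finset.mem_coe, Finset.mem_filter] at hx
        simp [Multiset.mem_toFinset, Polynomial.mem_roots, hP, Polynomial.IsRoot, hx.2]
      · intro x _ y _ h
        exact Units.ext h
    calc _ ≤ P.roots.toFinset.card := h1
      _ ≤ Multiset.card P.roots := P.roots.toFinset_card_le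
      _ ≤ P.natDegree := P.card_roots'
  have hsplit := Finset.card_filter_add_card_filter_not
    (s := (Finset.univ : Finset Fˣ)) (p := fun x : Fˣ => P.eval (x : F) = 0)
  have hcard : (Finset.univ : Finset Fˣ).card = Fintype.card F - 1 := by
    simp [Finset.card_univ, Fintype.card_units]
  have hrfl : (Finset.univ.filter (fun x : Fˣ => ¬ P.eval (x : F) = 0)).card
      = (Finset.univ.filter (fun x : Fˣ => P.eval (x : F) ≠ 0)).card := by
    simp only [ne_eq]
  rw [hrfl, hcard] at hsplit
  omega

lemma key {F : Type*} [Field F] [Fintype F] [DecidableEq F] :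
    ∀ (r : ℕ) (b : Fin r → ℕ) (f : MvPolynomial (Fin r) F), f ≠ 0 →
      (∀ i, MvPolynomial.degreeOf i f ≤ b i) →
      ∏ i, (Fintype.card F - 1 - b i) ≤
        (Finset.univ.filter
          (fun t : Fin r → Fˣ => MvPolynomial.eval (fun i => (t i : F)) f ≠ 0)).card := by
  intro r
  induction r with
  | zero =>
      intro b f hf _
      have : ∀ t : Fin 0 → Fˣ, MvPolynomial.eval (fun i => (t i : F)) f ≠ 0 := by
        intro t
        rw [MvPolynomial.eq_C_of_isEmpty f, MvPolynomial.eval_C]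
        intro h
        apply hf
        rw [MvPolynomial.eq_C_of_isEmpty f, h, map_zero]
      simp [Finset.filter_true_of_mem (fun t _ => this t)]
  | succ n ih =>
      intro b f hf hdeg
      set p := MvPolynomial.finSuccEquiv F n f with hp
      have hpne : p ≠ 0 := by
        simp [hp, AddEquivClass.map_ne_zero_iff, hf]
      set d := p.natDegree with hd
      have hdb : d ≤ b 0 := by
        rw [hd, hp, MvPolynomial.natDegree_finSuccEquiv]; exact hdeg 0
      set g := p.leadingCoeff with hg
      have hgne : g ≠ 0 := Polynomial.leadingCoeff_ne_zero.2 hpne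
      have hgdeg : ∀ j : Fin n, MvPolynomial.degreeOf j g ≤ b j.succ := by
        intro j
        calc MvPolynomial.degreeOf j g ≤ MvPolynomial.degreeOf j.succ f :=
              MvPolynomial.degreeOf_coeff_finSuccEquiv f j d
          _ ≤ b j.succ := hdeg j.succ
      set A := Finset.univ.filter
        (fun a : Fin n → Fˣ => MvPolynomial.eval (fun j => (a j : F)) g ≠ 0) with hA
      have hAcard : ∏ j : Fin n, (Fintype.card F - 1 - b j.succ) ≤ A.card :=
        ih (fun j => b j.succ) g hgne hgdeg
      -- for each a ∈ A, many good x
      have hfiber : ∀ a ∈ A, Fintype.card F - 1 - b 0 ≤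
          (Finset.univ.filter (fun x : Fˣ =>
            MvPolynomial.eval (fun i => ((Fin.cons x a : Fin (n+1) → Fˣ) i : F)) f ≠ 0)).card := by
        intro a ha
        simp only [hA, Finset.mem_filter] at ha
        set P := p.map (MvPolynomial.eval (fun j => ((a j : F)))) with hP
        have hPne : P ≠ 0 := by
          intro h
          apply ha.2
          have : P.coeff d = 0 := by rw [h]; simp
          rwa [hP, Polynomial.coeff_map] at this
        have hPdeg : P.natDegree ≤ b 0 :=
          le_trans Polynomial.natDegree_map_le hdb
        have := univar_lb P hPne
        have hle : Fintype.card F - 1 - b 0 ≤ Fintype.card F - 1 - P.natDegree :=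
          Nat.sub_le_sub_left hPdeg _
        refine le_trans (le_trans hle this) (Finset.card_le_card ?_)
        intro x hx
        simp only [Finset.mem_filter, Finset.mem_univ, true_and] at hx ⊢
        have heq : (fun i => ((Fin.cons x a : Fin (n+1) → Fˣ) i : F))
            = Fin.cons (x : F) (fun j => (a j : F)) := by
          funext i
          refine Fin.cases ?_ ?_ i <;> simp
        rw [heq, MvPolynomial.eval_eq_eval_mv_eval']
        exact hx
      -- now count pairs
      set B := Finset.univ.filter
        (fun z : Fˣ × (Fin n → Fˣ) =>
          MvPolynomial.eval (fun i => ((Fin.cons z.1 z.2 : Fin (n+1) → Fˣ) i : F)) f ≠ 0) with hB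
      have hBS : B.card ≤ (Finset.univ.filter
          (fun t : Fin (n+1) → Fˣ => MvPolynomial.eval (fun i => (t i : F)) f ≠ 0)).card := by
        refine Finset.card_le_card_of_injOn (fun z => Fin.cons z.1 z.2) ?_ ?_
        · intro z hz
          simp only [hB, Finset.mem_coe, Finset.mem_filter, Finset.mem_univ, true_and] at hz ⊢
          exact hz
        · intro z _ w _ h
          obtain ⟨h1, h2⟩ := Fin.cons_inj.mp h
          exact Prod.ext h1 h2
      have hBlb : A.card * (Fintype.card F - 1 - b 0) ≤ B.card := by
        classical
        have hunion : (A.biUnion (fun a =>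
            (Finset.univ.filter (fun x : Fˣ =>
              MvPolynomial.eval (fun i => ((Fin.cons x a : Fin (n+1) → Fˣ) i : F)) f ≠ 0)).image
              (fun x => ((x, a) : Fˣ × (Fin n → Fˣ))))) ⊆ B := by
          intro z hz
          simp only [Finset.mem_biUnion, Finset.mem_image, Finset.mem_filter,
            Finset.mem_univ, true_and] at hz
          obtain ⟨a, _, x, hx, rfl⟩ := hz
          simp only [hB, Finset.mem_filter, Finset.mem_univ, true_and]
          exact hx
        have hdisj : (A : Set (Fin n → Fˣ)).PairwiseDisjoint (fun a =>
            (Finset.univ.filter (fun x : Fˣ =>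
              MvPolynomial.eval (fun i => ((Fin.cons x a : Fin (n+1) → Fˣ) i : F)) f ≠ 0)).image
              (fun x => ((x, a) : Fˣ × (Fin n → Fˣ)))) := by
          intro a _ a' _ hne
          apply Finset.disjoint_left.2
          intro z hz hz'
          simp only [Finset.mem_image] at hz hz'
          obtain ⟨x, _, rfl⟩ := hz
          obtain ⟨x', _, h⟩ := hz'
          exact hne (congrArg Prod.snd h).symm
        calc A.card * (Fintype.card F - 1 - b 0)
            = ∑ _a ∈ A, (Fintype.card F - 1 - b 0) := by
              rw [Finset.sum_const, smul_eq_mul]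
          _ ≤ ∑ a ∈ A, ((Finset.univ.filter (fun x : Fˣ =>
              MvPolynomial.eval (fun i => ((Fin.cons x a : Fin (n+1) → Fˣ) i : F)) f ≠ 0)).image
                (fun x => ((x, a) : Fˣ × (Fin n → Fˣ)))).card := by
              apply Finset.sum_le_sum
              intro a ha
              rw [Finset.card_image_of_injective _ (fun x y h => (Prod.ext_iff.mp h).1)]
              exact hfiber a ha
          _ = (A.biUnion _).card := (Finset.card_biUnion hdisj).symm
          _ ≤ B.card := Finset.card_le_card hunion
      calc ∏ i : Fin (n+1), (Fintype.card F - 1 - b i)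
          = (Fintype.card F - 1 - b 0) * ∏ j : Fin n, (Fintype.card F - 1 - b j.succ) :=
            Fin.prod_univ_succ _
        _ ≤ (Fintype.card F - 1 - b 0) * A.card := Nat.mul_le_mul_left _ hAcard
        _ = A.card * (Fintype.card F - 1 - b 0) := Nat.mul_comm _ _
        _ ≤ B.card := hBlb
        _ ≤ _ := hBS

/-- A nonzero polynomial with `deg_{t_i} f ≤ b_i ≤ q-2` has at most
`(q-1)^r - ∏ (q-1-b_i)` zeros in the torus. -/
theorem zeros_bound_on_torus {F : Type*} [Field F] [Fintype F] [DecidableEq F]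
    {r : ℕ} (hr : 1 ≤ r) (b : Fin r → ℕ) (hb : ∀ i, b i ≤ Fintype.card F - 2)
    (f : MvPolynomial (Fin r) F) (hf : f ≠ 0)
    (hdeg : ∀ i, MvPolynomial.degreeOf i f ≤ b i) :
    (Finset.univ.filter
        (fun t : Fin r → Fˣ => MvPolynomial.eval (fun i => (t i : F)) f = 0)).card ≤
      (Fintype.card F - 1) ^ r - ∏ i, (Fintype.card F - 1 - b i) := by
  have hk := key r b f hf hdeg
  have hsplit := Finset.card_filter_add_card_filter_not
    (s := (Finset.univ : Finset (Fin r → Fˣ)))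
    (p := fun t : Fin r → Fˣ => MvPolynomial.eval (fun i => (t i : F)) f = 0)
  have hcard : (Finset.univ : Finset (Fin r → Fˣ)).card = (Fintype.card F - 1) ^ r := by
    simp [Finset.card_univ, Fintype.card_fun, Fintype.card_units]
  have hrfl : (Finset.univ.filter
      (fun t : Fin r → Fˣ => ¬ MvPolynomial.eval (fun i => (t i : F)) f = 0)).card
      = (Finset.univ.filter
      (fun t : Fin r → Fˣ => MvPolynomial.eval (fun i => (t i : F)) f ≠ 0)).card := by
    simp only [ne_eq]
  rw [hrfl, hcard] at hsplit
  rw [Nat.eq_sub_of_add_eq hsplit]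
  exact Nat.sub_le_sub_left hk _
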